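/- Let $\delta \in (0,1]$, and define $\epsilon_k = \frac{2\sqrt{\min_j |h_j|^2 P_j}}{\sqrt{\sum_{j=1}^K |h_j|^2 \beta_j P_j + \sigma_m^2}}\sqrt{2\log(1.25/\delta)}$. If $\beta_j \ge \beta_{\min} > 0$ for all $j$ and $|h_j|^2 P_j \ge m_{\min} > 0$, then $\epsilon_k \le \frac{1}{\sqrt{K}} \cdot \frac{2\sqrt{\min_j |h_j|^2 P_j}}{\sqrt{\min_j |h_j|^2 \beta_j P_j}}\sqrt{2\log(1.25/\delta)}$, i.e., the per-user privacy leakage is $O(1/\sqrt{K})$. -/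

import Mathlib

theorem stmt_3 (K : ℕ) (hK : 0 < K) (h : Fin K → ℂ) (hh : ∀ j, h j ≠ 0)
    (P : Fin K → ℝ) (hP : ∀ j, 0 < P j) (β : Fin K → ℝ)
    (hβ1 : ∀ j, β j ≤ 1) (σm2 : ℝ) (hσ : 0 ≤ σm2)
    (δ : ℝ) (hδ : 0 < δ ∧ δ ≤ 1)
    (βmin mmin : ℝ) (hβmin : 0 < βmin) (hβlb : ∀ j, βmin ≤ β j)
    (hmmin : 0 < mmin) (hmlb : ∀ j, mmin ≤ ‖h j‖ ^ 2 * P j)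
    (k : Fin K) (εk : ℝ)
    (hεk : εk = 2 * Real.sqrt (Finset.univ.inf'
        (Finset.univ_nonempty_iff.2 ⟨⟨0, hK⟩⟩) (fun j => ‖h j‖ ^ 2 * P j)) /
      Real.sqrt (∑ j, ‖h j‖ ^ 2 * β j * P j + σm2) *
      Real.sqrt (2 * Real.log (1.25 / δ))) :
    εk ≤ (1 / Real.sqrt K) *
      (2 * Real.sqrt (Finset.univ.inf'
        (Finset.univ_nonempty_iff.2 ⟨⟨0, hK⟩⟩) (fun j => ‖h j‖ ^ 2 * P j)) /
      Real.sqrt (Finset.univ.inf'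
        (Finset.univ_nonempty_iff.2 ⟨⟨0, hK⟩⟩) (fun j => ‖h j‖ ^ 2 * β j * P j))) *
      Real.sqrt (2 * Real.log (1.25 / δ)) := by
  set ne : (Finset.univ : Finset (Fin K)).Nonempty := Finset.univ_nonempty_iff.2 ⟨⟨0, hK⟩⟩
  set M1 := Finset.univ.inf' ne (fun j => ‖h j‖ ^ 2 * P j) with hM1def
  set M2 := Finset.univ.inf' ne (fun j => ‖h j‖ ^ 2 * β j * P j) with hM2def
  have hM2pos : 0 < M2 := by
    rw [hM2def, Finset.lt_inf'_iff]
    intro j _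
    have := (hmmin.trans_le (hmlb j))
    have hβj : 0 < β j := hβmin.trans_le (hβlb j)
    have : 0 < ‖h j‖ ^ 2 * P j := this
    calc (0:ℝ) < (‖h j‖ ^ 2 * P j) * β j := by positivity
      _ = ‖h j‖ ^ 2 * β j * P j := by ring
  have hsum : (K : ℝ) * M2 ≤ ∑ j, ‖h j‖ ^ 2 * β j * P j + σm2 := by
    have h1 := Finset.card_nsmul_le_sum (Finset.univ : Finset (Fin K))
      (fun j => ‖h j‖ ^ 2 * β j * P j) M2
      (fun j hj => Finset.inf'_le _ hj)
    have : (K : ℝ) * M2 ≤ ∑ j, ‖h j‖ ^ 2 * β j * P j := by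
      simpa [Finset.card_univ, nsmul_eq_mul] using h1
    linarith
  have hKpos : (0:ℝ) < K := by exact_mod_cast hK
  have hden : Real.sqrt K * Real.sqrt M2 ≤
      Real.sqrt (∑ j, ‖h j‖ ^ 2 * β j * P j + σm2) := by
    rw [← Real.sqrt_mul hKpos.le]
    exact Real.sqrt_le_sqrt hsum
  have hdenpos : 0 < Real.sqrt K * Real.sqrt M2 := by positivity
  have key : 2 * Real.sqrt M1 / Real.sqrt (∑ j, ‖h j‖ ^ 2 * β j * P j + σm2)
      ≤ 2 * Real.sqrt M1 / (Real.sqrt K * Real.sqrt M2) := by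
    gcongr
  have hrhs : (1 / Real.sqrt K) * (2 * Real.sqrt M1 / Real.sqrt M2)
      = 2 * Real.sqrt M1 / (Real.sqrt K * Real.sqrt M2) := by
    field_simp
  rw [hεk, hrhs]
  exact mul_le_mul_of_nonneg_right key (Real.sqrt_nonneg _)
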